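/- For all u>0 and all λ > max(2(u−1), 0), ∫_λ^∞ x^{u−1} e^{−x} dx ≤ 2 λ^{u−1} e^{−λ}. Equivalently, if ξ has distribution Gamma(u,v) with u,v>0, then P(ξ ≥ λ/v) ≤ 2 λ^{u−1} e^{−λ}/Γ(u) for all λ > max(2(u−1),0). -/

import Mathlib

open MeasureTheory ProbabilityTheory Real

lemma aux_pointwise (u l x : ℝ) (hu : 0 < u) (hl : max (2 * (u - 1)) 0 < l)
    (hx : l < x) : x ^ (u - 1) * Real.exp (-x) ≤
      (l ^ (u - 1) * Real.exp (-(l / 2))) * Real.exp (-(2⁻¹ * x)) := by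
  have hl0 : 0 < l := lt_of_le_of_lt (le_max_right _ _) hl
  have hl2 : 2 * (u - 1) < l := lt_of_le_of_lt (le_max_left _ _) hl
  have hx0 : 0 < x := hl0.trans hx
  have hkey : x ^ (u - 1) * Real.exp (-(2⁻¹ * x)) ≤ l ^ (u - 1) * Real.exp (-(l / 2)) := by
    rcases le_or_gt u 1 with h1 | h1
    · have h2 : x ^ (u - 1) ≤ l ^ (u - 1) :=
        Real.rpow_le_rpow_of_nonpos hl0 hx.le (by linarith)
      have h3 : Real.exp (-(2⁻¹ * x)) ≤ Real.exp (-(l / 2)) := by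
        apply Real.exp_le_exp.2; nlinarith
      exact mul_le_mul h2 h3 (Real.exp_pos _).le (Real.rpow_nonneg hl0.le _)
    · -- u > 1
      have hlog : Real.log (x / l) ≤ x / l - 1 :=
        Real.log_le_sub_one_of_pos (div_pos hx0 hl0)
      have hdiv : (x / l) ^ (u - 1) ≤ Real.exp ((x - l) / 2) := by
        rw [Real.rpow_def_of_pos (div_pos hx0 hl0)]
        apply Real.exp_le_exp.2
        have h4 : (u - 1) * Real.log (x / l) ≤ (u - 1) * (x / l - 1) :=
          mul_le_mul_of_nonneg_left hlog (by linarith)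
        rw [mul_comm]
        refine h4.trans ?_
        rw [div_sub_one hl0.ne', ← mul_div_assoc, div_le_div_iff₀ hl0 two_pos]
        nlinarith [sub_nonneg.2 hx.le]
      have h5 : x ^ (u - 1) = l ^ (u - 1) * (x / l) ^ (u - 1) := by
        rw [Real.div_rpow hx0.le hl0.le]
        field_simp
      rw [h5, mul_assoc]
      apply mul_le_mul_of_nonneg_left _ (Real.rpow_nonneg hl0.le _)
      calc (x / l) ^ (u - 1) * Real.exp (-(2⁻¹ * x))
          ≤ Real.exp ((x - l) / 2) * Real.exp (-(2⁻¹ * x)) :=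
            mul_le_mul_of_nonneg_right hdiv (Real.exp_pos _).le
        _ = Real.exp (-(l / 2)) := by rw [← Real.exp_add]; ring_nf
  calc x ^ (u - 1) * Real.exp (-x)
      = (x ^ (u - 1) * Real.exp (-(2⁻¹ * x))) * Real.exp (-(2⁻¹ * x)) := by
        rw [mul_assoc, ← Real.exp_add]; ring_nf
    _ ≤ (l ^ (u - 1) * Real.exp (-(l / 2))) * Real.exp (-(2⁻¹ * x)) :=
        mul_le_mul_of_nonneg_right hkey (Real.exp_pos _).le

lemma aux_integral (u l : ℝ) (hu : 0 < u) (hl : max (2 * (u - 1)) 0 < l) :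
    (∫ x in Set.Ioi l, x ^ (u - 1) * Real.exp (-x)) ≤ 2 * l ^ (u - 1) * Real.exp (-l) := by
  have hl0 : 0 < l := lt_of_le_of_lt (le_max_right _ _) hl
  have I1 : IntegrableOn (fun x : ℝ => x ^ (u - 1) * Real.exp (-x)) (Set.Ioi l) := by
    have := (Real.GammaIntegral_convergent hu).mono_set (Set.Ioi_subset_Ioi hl0.le)
    exact this.congr_fun (fun x _ => mul_comm _ _) measurableSet_Ioi
  have I2 : IntegrableOn
      (fun x : ℝ => (l ^ (u - 1) * Real.exp (-(l / 2))) * Real.exp (-(2⁻¹ * x)))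
      (Set.Ioi l) := by
    have h : IntegrableOn (fun x : ℝ => Real.exp (-2⁻¹ * x)) (Set.Ioi l) :=
      exp_neg_integrableOn_Ioi l (by norm_num)
    have h2 : IntegrableOn (fun x : ℝ => Real.exp (-(2⁻¹ * x))) (Set.Ioi l) :=
      h.congr_fun (fun x _ => by simp only [neg_mul]) measurableSet_Ioi
    exact h2.const_mul _
  have hmono := setIntegral_mono_on I1 I2 measurableSet_Ioi
      (fun x hx => aux_pointwise u l x hu hl hx)
  refine hmono.trans_eq ?_
  rw [integral_const_mul]
  have hcomp : (∫ x in Set.Ioi l, Real.exp (-(2⁻¹ * x)))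
      = (2⁻¹ : ℝ)⁻¹ • ∫ x in Set.Ioi ((2⁻¹ : ℝ) * l), Real.exp (-x) := by
    exact integral_comp_mul_left_Ioi (fun y => Real.exp (-y)) l (by norm_num)
  rw [hcomp, integral_exp_neg_Ioi, smul_eq_mul,
    show ((2⁻¹ : ℝ)⁻¹ = 2) by norm_num,
    show Real.exp (-l) = Real.exp (-(l/2)) * Real.exp (-(2⁻¹*l)) by
      rw [← Real.exp_add]; ring_nf]
  ring

theorem statement6 (u : ℝ) (hu : 0 < u) (l : ℝ) (hl : max (2 * (u - 1)) 0 < l) :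
    (∫ x in Set.Ioi l, x ^ (u - 1) * Real.exp (-x)) ≤ 2 * l ^ (u - 1) * Real.exp (-l) ∧
    ∀ v : ℝ, 0 < v →
      gammaMeasure u v (Set.Ici (l / v)) ≤
        ENNReal.ofReal (2 * l ^ (u - 1) * Real.exp (-l) / Real.Gamma u) := by
  have hl0 : 0 < l := lt_of_le_of_lt (le_max_right _ _) hl
  have hmain := aux_integral u l hu hl
  refine ⟨hmain, fun v hv => ?_⟩
  have hG : 0 < Real.Gamma u := Real.Gamma_pos_of_pos hu
  have hlv : 0 < l / v := div_pos hl0 hv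
  set f : ℝ → ℝ := fun y => y ^ (u - 1) * Real.exp (-y) with hf
  -- pdf equals (v / Γ u) * f (v * x) on Ici (l / v)
  have hpdf : ∀ x ∈ Set.Ici (l / v), gammaPDFReal u v x = (v / Real.Gamma u) * f (v * x) := by
    intro x hx
    have hx0 : 0 < x := lt_of_lt_of_le hlv hx
    have hvx : 0 < v * x := mul_pos hv hx0
    rw [gammaPDFReal, if_pos hx0.le, hf]
    simp only
    rw [Real.mul_rpow hv.le hx0.le, Real.rpow_sub_one hv.ne' u]
    field_simp
  -- integrability
  have If : IntegrableOn f (Set.Ioi l) := by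
    have := (Real.GammaIntegral_convergent hu).mono_set (Set.Ioi_subset_Ioi hl0.le)
    exact this.congr_fun (fun x _ => mul_comm _ _) measurableSet_Ioi
  have Icomp : IntegrableOn (fun x => f (v * x)) (Set.Ioi (l / v)) := by
    rw [integrableOn_Ioi_comp_mul_left_iff f (l / v) hv, mul_div_cancel₀ _ hv.ne']
    exact If
  have Ici_int : IntegrableOn (fun x => (v / Real.Gamma u) * f (v * x)) (Set.Ici (l / v)) := by
    rw [integrableOn_Ici_iff_integrableOn_Ioi]
    exact Icomp.const_mul _
  -- compute the measure
  have hmeas : gammaMeasure u v (Set.Ici (l / v))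
      = ENNReal.ofReal (∫ x in Set.Ici (l / v), (v / Real.Gamma u) * f (v * x)) := by
    rw [gammaMeasure, withDensity_apply _ measurableSet_Ici]
    rw [setLIntegral_congr_fun measurableSet_Ici
      ((fun x (hx : x ∈ Set.Ici (l / v)) => by
        rw [gammaPDF, hpdf x hx]))]
    rw [← ofReal_integral_eq_lintegral_ofReal Ici_int]
    refine (ae_restrict_iff' measurableSet_Ici).mpr (ae_of_all _ fun x hx => ?_)
    have hx0 : 0 < v * x := mul_pos hv (hlv.trans_le hx)
    have hfnn : (0:ℝ) ≤ f (v * x) := by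
      have : f (v * x) = (v * x) ^ (u - 1) * Real.exp (-(v * x)) := rfl
      rw [this]; positivity
    positivity
  rw [hmeas]
  apply ENNReal.ofReal_le_ofReal
  have hchange : (∫ x in Set.Ici (l / v), (v / Real.Gamma u) * f (v * x))
      = (1 / Real.Gamma u) * ∫ y in Set.Ioi l, f y := by
    rw [MeasureTheory.integral_Ici_eq_integral_Ioi, integral_const_mul,
      integral_comp_mul_left_Ioi f (l / v) hv, mul_div_cancel₀ _ hv.ne', smul_eq_mul]
    field_simp
  have hdg : 2 * l ^ (u - 1) * Real.exp (-l) / Real.Gamma u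
      = 1 / Real.Gamma u * (2 * l ^ (u - 1) * Real.exp (-l)) := by ring
  rw [hchange, hdg]
  exact mul_le_mul_of_nonneg_left hmain (by positivity)
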